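/- Let w be a nonempty word with canonical factorization w = w₁w₂⋯w_n, and let ℓ be a Lyndon word occurring as a factor of w, say w = aℓb. Then this occurrence of ℓ is fully contained in one of the factors w_i: there exist an index i and words p, q such that w_i = pℓq, a = w₁⋯w_{i-1}p, and b = qw_{i+1}⋯w_n. -/

import Mathlib

variable {I : Type*} [LinearOrder I]

/-- A word is *Lyndon* if it is nonempty and lexicographically strictly smaller
than each of its proper nonempty suffixes. -/
def IsLyndon (w : List I) : Prop :=
  w ≠ [] ∧ ∀ u v : List I, w = u ++ v → u ≠ [] → v ≠ [] → w < v

/-- `fs` is the canonical (Chen–Fox–Lyndon) factorization of `w`: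
a weakly decreasing list of Lyndon words whose concatenation is `w`. -/
def IsCFLFactorization (w : List I) (fs : List (List I)) : Prop :=
  fs.flatten = w ∧ (∀ f ∈ fs, IsLyndon f) ∧ fs.Chain' (· ≥ ·)

lemma my_le_append (u t : List I) : u ≤ u ++ t := by
  induction u with
  | nil =>
    rw [List.nil_append]
    cases t with
    | nil => exact le_rfl
    | cons x t => exact le_of_lt List.Lex.nil
  | cons a u ih => exact List.cons_le_cons a ih

lemma my_prefix_le {u v : List I} (h : u <+: v) : u ≤ v := by
  obtain ⟨t, rfl⟩ := h; exact my_le_append u t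

lemma last_block (fs : List (List I)) (u : List I) (hu : u ≠ [])
    (hpre : u <+: fs.flatten) : ∃ f ∈ fs, ∃ t : List I, t ≠ [] ∧ t <+: f ∧ t <:+ u := by
  induction fs generalizing u with
  | nil => simp only [List.flatten_nil, List.prefix_nil] at hpre; exact absurd hpre hu
  | cons f rest ih =>
    obtain ⟨r, hr⟩ := hpre
    rcases List.append_eq_append_iff.mp hr with ⟨a', hf, -⟩ | ⟨c, huc, hrest⟩
    · exact ⟨f, List.mem_cons_self, u, hu, ⟨a', hf.symm⟩, List.suffix_refl u⟩
    · rcases eq_or_ne c [] with rfl | hc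
      · rw [List.append_nil] at huc
        exact ⟨f, List.mem_cons_self, u, hu, huc ▸ List.prefix_refl f,
          List.suffix_refl u⟩
      · obtain ⟨f', hf'mem, t, ht, htpre, htsuf⟩ := ih c hc ⟨r, hrest.symm⟩
        exact ⟨f', List.mem_cons_of_mem f hf'mem, t, ht, htpre,
          htsuf.trans (huc ▸ ⟨f, rfl⟩)⟩

lemma main_lemma (ws : List (List I)) (l : List I)
    (hlyn : ∀ f ∈ ws, IsLyndon f) (hchain : List.Pairwise (· ≥ ·) ws)
    (hl : IsLyndon l) : ∀ a b : List I, ws.flatten = a ++ l ++ b →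
    ∃ (i : ℕ) (hi : i < ws.length) (p q : List I),
      ws.get ⟨i, hi⟩ = p ++ l ++ q ∧ a = (ws.take i).flatten ++ p ∧
      b = q ++ (ws.drop (i + 1)).flatten := by
  induction ws with
  | nil =>
    intro a b heq
    exfalso
    have := hl.1
    simp only [List.flatten_nil] at heq
    rcases List.append_eq_nil_iff.mp heq.symm with ⟨h1, -⟩
    exact this (List.append_eq_nil_iff.mp h1).2
  | cons f rest ih =>
    intro a b heq
    have hlynf : IsLyndon f := hlyn f (List.mem_cons_self)
    have hlyn' : ∀ g ∈ rest, IsLyndon g := fun g hg => hlyn g (List.mem_cons_of_mem f hg)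
    have hpair := List.pairwise_cons.mp hchain
    rw [List.flatten_cons, List.append_assoc] at heq
    rcases List.append_eq_append_iff.mp heq with ⟨a', ha, hrest⟩ | ⟨c, hf, hlb⟩
    · -- a = f ++ a', rest.flatten = a' ++ (l ++ b)
      obtain ⟨i, hi, p, q, hget, hp, hq⟩ := ih hlyn' hpair.2 a' b
        (by rw [hrest, List.append_assoc])
      refine ⟨i + 1, by simpa using hi, p, q, ?_, ?_, ?_⟩
      · simpa using hget
      · simp [ha, hp, List.flatten_cons, List.append_assoc]
      · simpa using hq
    · -- f = a ++ c, l ++ b = c ++ rest.flatten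
      rcases List.append_eq_append_iff.mp hlb with ⟨e, hce, hb⟩ | ⟨e, hle, hrest'⟩
      · -- c = l ++ e, b = e ++ rest.flatten
        refine ⟨0, by simp, a, e, ?_, by simp, by simpa using hb⟩
        simp [hf, hce, List.append_assoc]
      · -- l = c ++ e, rest.flatten = e ++ b
        rcases eq_or_ne e [] with rfl | he
        · rw [List.append_nil] at hle
          refine ⟨0, by simp, a, [], ?_, by simp, by simpa using hrest'.symm⟩
          simp [hf, ← hle]
        · rcases eq_or_ne c [] with rfl | hc
          · rw [List.nil_append] at hle
            obtain ⟨i, hi, p, q, hget, hp, hq⟩ := ih hlyn' hpair.2 [] b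
              (by rw [hrest', hle, List.nil_append])
            refine ⟨i + 1, by simpa using hi, p, q, ?_, ?_, ?_⟩
            · simpa using hget
            · rw [List.append_nil] at hf
              simp [hf, ← hp, List.flatten_cons]
            · simpa using hq
          · -- contradiction
            exfalso
            obtain ⟨blk, hblkmem, t, ht, htpre, htsuf⟩ :=
              last_block rest e he ⟨b, hrest'.symm⟩
            obtain ⟨e₁, he₁⟩ := htsuf
            have hlt1 : l < t :=
              hl.2 (c ++ e₁) t (by rw [hle, ← he₁, List.append_assoc])
                (by simp [hc]) ht
            have hlt2 : t ≤ blk := my_prefix_le htpre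
            have hlt3 : blk ≤ f := hpair.1 blk hblkmem
            have hcl : c ≤ l := my_prefix_le ⟨e, hle.symm⟩
            rcases eq_or_ne a [] with rfl | ha
            · rw [List.nil_append] at hf
              exact absurd (((hf ▸ hcl).trans_lt hlt1).trans_le (hlt2.trans hlt3))
                (lt_irrefl f)
            · have hfc : f < c := hlynf.2 a c hf ha hc
              exact absurd (((hfc.trans_le hcl).trans hlt1).trans_le (hlt2.trans hlt3))
                (lt_irrefl f)

/-- If `w = w₁⋯w_n` is the canonical factorization and a Lyndon word `ℓ` occurs
as a factor of `w`, say `w = aℓb`, then that occurrence of `ℓ` is fully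
contained in one of the `wᵢ`. -/
theorem lyndon_factor_in_canonical_block (w : List I) (ws : List (List I))
    (l a b : List I) (hw : w ≠ []) (hws : IsCFLFactorization w ws)
    (hl : IsLyndon l) (heq : w = a ++ l ++ b) :
    ∃ (i : ℕ) (hi : i < ws.length) (p q : List I),
      ws.get ⟨i, hi⟩ = p ++ l ++ q ∧
      a = (ws.take i).flatten ++ p ∧
      b = q ++ (ws.drop (i + 1)).flatten := by
  obtain ⟨hflat, hlyn, hchain⟩ := hws
  have hpair : List.Pairwise (· ≥ ·) ws := List.isChain_iff_pairwise.mp hchain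
  exact main_lemma ws l hlyn hpair hl a b (hflat.trans heq)
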